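/- Assume: 0 < F(x) ≤ c for all x > 0, limsup_{x→∞} F(x) < 1, liminf_{x→0⁺} F(x) > 1; there is a unique x̄ > 0 with F(x̄) = 1; α := inf_{x>0} F(x) and c := sup_{x>0} F(x) satisfy 0 < α < 1 < c < ∞; and F(x) ≤ 1 if and only if x ≥ x̄ (equivalently F(x) ≥ 1 if and only if x ≤ x̄). Then every positive solution (A_n)_{n≥−m} of A_{n+1} = A_n·F(A_{n−m}) satisfies x̄·α^{m+1} < liminf_{n→∞} A_n ≤ x̄ ≤ limsup_{n→∞} A_n < x̄·c^{m+1}. -/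

import Mathlib

open Filter

lemma aux_unfold (m : ℕ) (F : ℝ → ℝ) (A : ℤ → ℝ)
    (hArec : ∀ n : ℤ, 0 ≤ n → A (n + 1) = A n * F (A (n - m)))
    (k : ℕ) : ∀ n : ℤ, (k : ℤ) ≤ n + 1 →
      A (n + 1) = A (n + 1 - k) * ∏ j ∈ Finset.range k, F (A (n - j - m)) := by
  induction k with
  | zero => simp
  | succ k ih =>
    intro n hn
    have hk : (k : ℤ) ≤ n + 1 := by push_cast at hn ⊢; omega
    have h0 : (0 : ℤ) ≤ n - k := by push_cast at hn; omega
    have h1 := hArec (n - k) h0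
    have e1 : n - (k : ℤ) + 1 = n + 1 - k := by ring
    rw [e1] at h1
    rw [ih n hk, Finset.prod_range_succ, h1]
    have e2 : n + 1 - ((k : ℕ) + 1 : ℕ) = n - k := by push_cast; ring
    rw [e2]
    have e3 : ∀ j : ℤ, n - j - m = n + (-m - j) := by intro j; ring
    simp only [e3]
    push_cast
    ring_nf

lemma aux_up (m : ℕ) (F : ℝ → ℝ) (A : ℤ → ℝ) (xbar : ℝ)
    (hcont : ContinuousOn F (Set.Ioi (0 : ℝ)))
    (huniq : ∀ y : ℝ, 0 < y → F y = 1 → y = xbar)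
    (hApos : ∀ n : ℤ, -(m : ℤ) ≤ n → 0 < A n)
    (hArec : ∀ n : ℤ, 0 ≤ n → A (n + 1) = A n * F (A (n - m)))
    (hx0 : 0 < xbar)
    (D : ℝ) (M : ℤ) (hMm : (m : ℤ) ≤ M) (hD : xbar < D)
    (key : ∀ n : ℤ, M ≤ n → D < A (n + 1) → A (n + 1) ≤ A n) :
    ∃ N : ℤ, ∀ n : ℤ, N ≤ n → A n ≤ D := by
  by_cases h : ∃ n₁ : ℤ, M + 1 ≤ n₁ ∧ A n₁ ≤ D
  · obtain ⟨n₁, hn₁, hA1⟩ := h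
    refine ⟨n₁, fun n hn => Int.le_induction (motive := fun n _ => A n ≤ D) hA1 (fun n hn ih => ?_) n hn⟩
    by_contra hgt
    have := key n (by omega) (lt_of_not_ge hgt)
    exact hgt (le_trans this ih)
  · push_neg at h
    exfalso
    set g : ℕ → ℝ := fun k => A (M + 1 + k) with hg
    have hstep : ∀ k : ℕ, g (k + 1) ≤ g k := by
      intro k
      have e : M + 1 + ((k : ℤ) + 1) = (M + 1 + k) + 1 := by ring
      have := key (M + 1 + k) (by omega) ?_
      · simpa [hg, e] using this
      · have := h (M + 1 + k + 1) (by omega)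
        linarith
    have hanti : Antitone g := antitone_nat_of_succ_le hstep
    have hbdd : BddBelow (Set.range g) := by
      refine ⟨D, ?_⟩
      rintro y ⟨k, rfl⟩
      exact (h (M + 1 + k) (by omega)).le
    have hL : Tendsto g atTop (nhds (⨅ k, g k)) := tendsto_atTop_ciInf hanti hbdd
    set L := ⨅ k, g k with hLdef
    have hLD : D ≤ L := le_ciInf fun k => (h (M + 1 + k) (by omega)).le
    have hL0 : 0 < L := lt_trans hx0 (lt_of_lt_of_le hD hLD)
    -- shifted sequence A (M + 1 + k - m) tends to L
    have hshift : Tendsto (fun k : ℕ => A (M + 1 + k - m)) atTop (nhds L) := by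
      have h2 : Tendsto (fun k : ℕ => g (k - m)) atTop (nhds L) :=
        hL.comp (tendsto_sub_atTop_nat m)
      refine h2.congr' ?_
      filter_upwards [eventually_ge_atTop m] with k hk
      have : ((k - m : ℕ) : ℤ) = (k : ℤ) - m := by omega
      simp [hg, this]
      ring_nf
    have hFL : Tendsto (fun k : ℕ => F (A (M + 1 + k - m))) atTop (nhds (F L)) :=
      ((hcont.continuousAt (Ioi_mem_nhds hL0)).tendsto.comp hshift)
    have hrec2 : ∀ k : ℕ, g (k + 1) = g k * F (A (M + 1 + k - m)) := by
      intro k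
      have := hArec (M + 1 + k) (by omega)
      have e : M + 1 + ((k : ℤ) + 1) = (M + 1 + k) + 1 := by ring
      simpa [hg, e] using this
    have h1 : Tendsto (fun k : ℕ => g (k + 1)) atTop (nhds L) :=
      hL.comp (tendsto_add_atTop_nat 1)
    have h2 : Tendsto (fun k : ℕ => g k * F (A (M + 1 + k - m))) atTop (nhds (L * F L)) :=
      hL.mul hFL
    have heq : L = L * F L := tendsto_nhds_unique (h1.congr fun k => hrec2 k) h2
    have hF1 : F L = 1 := by
      have := mul_left_cancel₀ (ne_of_gt hL0) (by rw [← heq, mul_one] : L * 1 = L * F L)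
      exact this.symm
    have := huniq L hL0 hF1
    rw [this] at hLD
    linarith

lemma aux_lo (m : ℕ) (F : ℝ → ℝ) (A : ℤ → ℝ) (xbar : ℝ)
    (hcont : ContinuousOn F (Set.Ioi (0 : ℝ)))
    (huniq : ∀ y : ℝ, 0 < y → F y = 1 → y = xbar)
    (hApos : ∀ n : ℤ, -(m : ℤ) ≤ n → 0 < A n)
    (hArec : ∀ n : ℤ, 0 ≤ n → A (n + 1) = A n * F (A (n - m)))
    (hx0 : 0 < xbar)
    (D : ℝ) (M : ℤ) (hMm : (m : ℤ) ≤ M) (hD : D < xbar)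
    (key : ∀ n : ℤ, M ≤ n → A (n + 1) < D → A n ≤ A (n + 1)) :
    ∃ N : ℤ, ∀ n : ℤ, N ≤ n → D ≤ A n := by
  by_cases h : ∃ n₁ : ℤ, M + 1 ≤ n₁ ∧ D ≤ A n₁
  · obtain ⟨n₁, hn₁, hA1⟩ := h
    refine ⟨n₁, fun n hn => Int.le_induction (motive := fun n _ => D ≤ A n) hA1 (fun n hn ih => ?_) n hn⟩
    by_contra hgt
    have := key n (by omega) (lt_of_not_ge hgt)
    exact hgt (le_trans ih this)
  · push_neg at h
    exfalso
    set g : ℕ → ℝ := fun k => A (M + 1 + k) with hg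
    have hstep : ∀ k : ℕ, g k ≤ g (k + 1) := by
      intro k
      have e : M + 1 + ((k : ℤ) + 1) = (M + 1 + k) + 1 := by ring
      have := key (M + 1 + k) (by omega) ?_
      · simpa [hg, e] using this
      · exact h (M + 1 + k + 1) (by omega)
    have hmonog : Monotone g := monotone_nat_of_le_succ hstep
    have hbdd : BddAbove (Set.range g) := by
      refine ⟨D, ?_⟩
      rintro y ⟨k, rfl⟩
      exact (h (M + 1 + k) (by omega)).le
    have hL : Tendsto g atTop (nhds (⨆ k, g k)) := tendsto_atTop_ciSup hmonog hbdd
    set L := ⨆ k, g k with hLdef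
    have hLD : L ≤ D := ciSup_le fun k => (h (M + 1 + k) (by omega)).le
    have hL0 : 0 < L := by
      have h0 : g 0 ≤ L := le_ciSup hbdd 0
      have : 0 < g 0 := hApos (M + 1 + (0 : ℕ)) (by omega)
      linarith
    have hshift : Tendsto (fun k : ℕ => A (M + 1 + k - m)) atTop (nhds L) := by
      have h2 : Tendsto (fun k : ℕ => g (k - m)) atTop (nhds L) :=
        hL.comp (tendsto_sub_atTop_nat m)
      refine h2.congr' ?_
      filter_upwards [eventually_ge_atTop m] with k hk
      have : ((k - m : ℕ) : ℤ) = (k : ℤ) - m := by omega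
      simp [hg, this]
      ring_nf
    have hFL : Tendsto (fun k : ℕ => F (A (M + 1 + k - m))) atTop (nhds (F L)) :=
      ((hcont.continuousAt (Ioi_mem_nhds hL0)).tendsto.comp hshift)
    have hrec2 : ∀ k : ℕ, g (k + 1) = g k * F (A (M + 1 + k - m)) := by
      intro k
      have := hArec (M + 1 + k) (by omega)
      have e : M + 1 + ((k : ℤ) + 1) = (M + 1 + k) + 1 := by ring
      simpa [hg, e] using this
    have h1 : Tendsto (fun k : ℕ => g (k + 1)) atTop (nhds L) :=
      hL.comp (tendsto_add_atTop_nat 1)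
    have h2 : Tendsto (fun k : ℕ => g k * F (A (M + 1 + k - m))) atTop (nhds (L * F L)) :=
      hL.mul hFL
    have heq : L = L * F L := tendsto_nhds_unique (h1.congr fun k => hrec2 k) h2
    have hF1 : F L = 1 := by
      have := mul_left_cancel₀ (ne_of_gt hL0) (by rw [← heq, mul_one] : L * 1 = L * F L)
      exact this.symm
    have := huniq L hL0 hF1
    rw [this] at hLD
    linarith

/-- Uniform persistence: under the standing hypotheses and with a unique positive
equilibrium `x̄`, every positive solution of `A_{n+1} = A_n F(A_{n-m})` satisfies
`x̄ α^{m+1} < liminf A_n ≤ x̄ ≤ limsup A_n < x̄ c^{m+1}`. -/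
theorem stmt_4 (m : ℕ) (F : ℝ → ℝ) (c α xbar : ℝ)
    (hFc : ∀ x : ℝ, 0 < x → 0 < F x ∧ F x ≤ c)
    (hcont : ContinuousOn F (Set.Ioi (0 : ℝ)))
    (hsup : Filter.limsup F Filter.atTop < 1)
    (hinf : 1 < Filter.liminf F (nhdsWithin 0 (Set.Ioi (0 : ℝ))))
    (hxbar : 0 < xbar ∧ F xbar = 1 ∧ ∀ y : ℝ, 0 < y → F y = 1 → y = xbar)
    (hα : α = sInf (F '' Set.Ioi 0))
    (hc : c = sSup (F '' Set.Ioi 0))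
    (hbounds : 0 < α ∧ α < 1 ∧ 1 < c)
    (hmono : ∀ x : ℝ, 0 < x → (F x ≤ 1 ↔ xbar ≤ x))
    (A : ℤ → ℝ)
    (hApos : ∀ n : ℤ, -(m : ℤ) ≤ n → 0 < A n)
    (hArec : ∀ n : ℤ, 0 ≤ n → A (n + 1) = A n * F (A (n - m))) :
    ((xbar * α ^ (m + 1) : ℝ) : EReal) <
        Filter.liminf (fun n => (A n : EReal)) Filter.atTop ∧
      Filter.liminf (fun n => (A n : EReal)) Filter.atTop ≤ (xbar : EReal) ∧
      (xbar : EReal) ≤ Filter.limsup (fun n => (A n : EReal)) Filter.atTop ∧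
      Filter.limsup (fun n => (A n : EReal)) Filter.atTop <
        ((xbar * c ^ (m + 1) : ℝ) : EReal) := by
  obtain ⟨hx0, hFx1, huniq⟩ := hxbar
  obtain ⟨hα0, hα1, h1c⟩ := hbounds
  have hc0 : (0 : ℝ) < c := lt_trans one_pos h1c
  have hFpos : ∀ x : ℝ, 0 < x → 0 < F x := fun x hx => (hFc x hx).1
  have hFlec : ∀ x : ℝ, 0 < x → F x ≤ c := fun x hx => (hFc x hx).2
  have hFgeα : ∀ x : ℝ, 0 < x → α ≤ F x := by
    intro x hx
    rw [hα]
    refine csInf_le ⟨0, ?_⟩ ⟨x, hx, rfl⟩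
    rintro y ⟨z, hz, rfl⟩
    exact (hFpos z hz).le
  have hFgt1 : ∀ x : ℝ, 0 < x → x < xbar → 1 < F x := by
    intro x hx hlt
    by_contra hle
    push_neg at hle
    exact absurd ((hmono x hx).1 hle) (not_le.2 hlt)
  have hFlt1 : ∀ x : ℝ, 0 < x → xbar < x → F x < 1 := by
    intro x hx hlt
    refine lt_of_le_of_ne ((hmono x hx).2 hlt.le) (fun h => ?_)
    exact absurd (huniq x hx h) (by linarith)
  -- unfold the recurrence m+1 steps
  have hrec : ∀ n : ℤ, (m : ℤ) ≤ n →
      A (n + 1) = A (n - m) * ∏ j ∈ Finset.range (m + 1), F (A (n - j - m)) := by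
    intro n hn
    have := aux_unfold m F A hArec (m + 1) n (by push_cast; omega)
    have e : n + 1 - ((m : ℕ) + 1 : ℕ) = n - m := by push_cast; ring
    rwa [e] at this
  have hposidx : ∀ n : ℤ, (m : ℤ) ≤ n → ∀ j ∈ Finset.range (m + 1), 0 < A (n - j - m) := by
    intro n hn j hj
    have hj' : (j : ℤ) ≤ m := by
      have := Finset.mem_range.1 hj; omega
    exact hApos _ (by omega)
  have hprod_le : ∀ n : ℤ, (m : ℤ) ≤ n →
      (∏ j ∈ Finset.range (m + 1), F (A (n - j - m))) ≤ c ^ (m + 1) := by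
    intro n hn
    calc (∏ j ∈ Finset.range (m + 1), F (A (n - j - m)))
        ≤ ∏ _j ∈ Finset.range (m + 1), c :=
          Finset.prod_le_prod (fun j hj => (hFpos _ (hposidx n hn j hj)).le)
            (fun j hj => hFlec _ (hposidx n hn j hj))
      _ = c ^ (m + 1) := by simp
  have hprod_ge : ∀ n : ℤ, (m : ℤ) ≤ n →
      α ^ (m + 1) ≤ ∏ j ∈ Finset.range (m + 1), F (A (n - j - m)) := by
    intro n hn
    calc α ^ (m + 1) = ∏ _j ∈ Finset.range (m + 1), α := by simp
      _ ≤ ∏ j ∈ Finset.range (m + 1), F (A (n - j - m)) :=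
          Finset.prod_le_prod (fun _ _ => hα0.le)
            (fun j hj => hFgeα _ (hposidx n hn j hj))
  have hprod_pos : ∀ n : ℤ, (m : ℤ) ≤ n →
      0 < ∏ j ∈ Finset.range (m + 1), F (A (n - j - m)) :=
    fun n hn => Finset.prod_pos fun j hj => hFpos _ (hposidx n hn j hj)
  -- basic step facts
  have hup_step : ∀ n : ℤ, (m : ℤ) ≤ n → A n < A (n + 1) → A (n - m) < xbar := by
    intro n hn hlt
    have hAn : 0 < A n := hApos n (by omega)
    have hF1 : 1 < F (A (n - m)) := by
      have h' := hArec n (by omega)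
      nlinarith
    by_contra hge
    push_neg at hge
    have := (hmono _ (hApos _ (by omega))).2 hge
    linarith
  have hdn_step : ∀ n : ℤ, (m : ℤ) ≤ n → A (n + 1) < A n → xbar ≤ A (n - m) := by
    intro n hn hlt
    have hAn : 0 < A n := hApos n (by omega)
    have hF1 : F (A (n - m)) < 1 := by
      have h' := hArec n (by omega)
      nlinarith
    exact (hmono _ (hApos _ (by omega))).1 hF1.le
  -- coarse upper bound
  have keyU : ∀ n : ℤ, (m : ℤ) ≤ n → xbar * c ^ (m + 1) < A (n + 1) → A (n + 1) ≤ A n := by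
    intro n hn hgt
    by_contra hlt
    push_neg at hlt
    have hxlt := hup_step n hn hlt
    have : A (n + 1) ≤ xbar * c ^ (m + 1) := by
      rw [hrec n hn]
      exact mul_le_mul hxlt.le (hprod_le n hn) (hprod_pos n hn).le hx0.le
    linarith
  have hBgt : xbar < xbar * c ^ (m + 1) :=
    lt_mul_of_one_lt_right hx0 (one_lt_pow₀ h1c (Nat.succ_ne_zero m))
  obtain ⟨N₁, hN₁⟩ := aux_up m F A xbar hcont huniq hApos hArec hx0
    (xbar * c ^ (m + 1)) m le_rfl hBgt keyU
  -- coarse lower bound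
  have keyL : ∀ n : ℤ, (m : ℤ) ≤ n → A (n + 1) < xbar * α ^ (m + 1) → A n ≤ A (n + 1) := by
    intro n hn hlt'
    by_contra hlt
    push_neg at hlt
    have hxge := hdn_step n hn hlt
    have : xbar * α ^ (m + 1) ≤ A (n + 1) := by
      rw [hrec n hn]
      exact mul_le_mul hxge (hprod_ge n hn) (pow_nonneg hα0.le _) (hApos _ (by omega)).le
    linarith
  have hbgt : xbar * α ^ (m + 1) < xbar :=
    mul_lt_of_lt_one_right hx0 (pow_lt_one₀ hα0.le hα1 (Nat.succ_ne_zero m))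
  obtain ⟨N₂, hN₂⟩ := aux_lo m F A xbar hcont huniq hApos hArec hx0
    (xbar * α ^ (m + 1)) m le_rfl hbgt keyL
  -- split product: peel off the j = 0 factor
  have hsplit : ∀ n : ℤ, (m : ℤ) ≤ n →
      A (n + 1) = (A (n - m) * F (A (n - m))) *
        ∏ j ∈ Finset.range m, F (A (n - (j + 1) - m)) := by
    intro n hn
    rw [hrec n hn, Finset.prod_range_succ']
    have e0 : n - ((0 : ℕ) : ℤ) - m = n - m := by push_cast; ring
    rw [e0]
    have e1 : ∀ j : ℕ, n - ((j + 1 : ℕ) : ℤ) - m = n - ((j : ℤ) + 1) - m := by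
      intro j; push_cast; ring
    rw [Finset.prod_congr rfl fun j _ => by rw [e1 j]]
    ring
  have hposidx' : ∀ n : ℤ, (m : ℤ) ≤ n → ∀ j ∈ Finset.range m, 0 < A (n - (j + 1) - m) := by
    intro n hn j hj
    have hj' : (j : ℤ) + 1 ≤ m := by
      have := Finset.mem_range.1 hj; omega
    exact hApos _ (by omega)
  have hprodm_le : ∀ n : ℤ, (m : ℤ) ≤ n →
      (∏ j ∈ Finset.range m, F (A (n - (j + 1) - m))) ≤ c ^ m := by
    intro n hn
    calc (∏ j ∈ Finset.range m, F (A (n - (j + 1) - m)))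
        ≤ ∏ _j ∈ Finset.range m, c :=
          Finset.prod_le_prod (fun j hj => (hFpos _ (hposidx' n hn j hj)).le)
            (fun j hj => hFlec _ (hposidx' n hn j hj))
      _ = c ^ m := by simp
  have hprodm_ge : ∀ n : ℤ, (m : ℤ) ≤ n →
      α ^ m ≤ ∏ j ∈ Finset.range m, F (A (n - (j + 1) - m)) := by
    intro n hn
    calc α ^ m = ∏ _j ∈ Finset.range m, α := by simp
      _ ≤ ∏ j ∈ Finset.range m, F (A (n - (j + 1) - m)) :=
          Finset.prod_le_prod (fun _ _ => hα0.le)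
            (fun j hj => hFgeα _ (hposidx' n hn j hj))
  set b : ℝ := xbar * α ^ (m + 1) with hbdef
  set B : ℝ := xbar * c ^ (m + 1) with hBdef
  have hb0 : 0 < b := mul_pos hx0 (pow_pos hα0 _)
  -- refined upper bound
  have hGcont : ContinuousOn (fun x : ℝ => x * F x) (Set.Icc b xbar) :=
    continuousOn_id.mul (hcont.mono (fun x hx => lt_of_lt_of_le hb0 hx.1))
  obtain ⟨xK, hxKmem, hxKmax⟩ :=
    isCompact_Icc.exists_isMaxOn (Set.nonempty_Icc.2 hbgt.le) hGcont
  set K : ℝ := xK * F xK with hKdef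
  have hKge : xbar ≤ K := by
    have := hxKmax (Set.mem_Icc.2 ⟨hbgt.le, le_rfl⟩)
    simpa [hFx1] using this
  have hKlt : K < xbar * c := by
    rcases eq_or_lt_of_le hxKmem.2 with h | h
    · rw [hKdef, h, hFx1, mul_one]
      exact lt_mul_of_one_lt_right hx0 h1c
    · have hxK0 : 0 < xK := lt_of_lt_of_le hb0 hxKmem.1
      have := hFlec xK hxK0
      nlinarith [hFpos xK hxK0]
  set Dhi : ℝ := max (K * c ^ m) ((xbar + B) / 2) with hDhidef
  have hDhi_gt : xbar < Dhi :=
    lt_max_of_lt_right (by rw [hBdef]; linarith)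
  have hDhi_lt : Dhi < B := by
    apply max_lt
    · have : K * c ^ m < (xbar * c) * c ^ m :=
        mul_lt_mul_of_pos_right hKlt (pow_pos hc0 m)
      calc K * c ^ m < (xbar * c) * c ^ m := this
        _ = B := by rw [hBdef]; ring
    · linarith
  have keyU' : ∀ n : ℤ, max (m : ℤ) (N₂ + m) ≤ n → Dhi < A (n + 1) → A (n + 1) ≤ A n := by
    intro n hn hgt
    have hnm : (m : ℤ) ≤ n := le_trans (le_max_left _ _) hn
    by_contra hlt
    push_neg at hlt
    have hxlt := hup_step n hnm hlt
    have hxge : b ≤ A (n - m) := hN₂ (n - m) (by omega)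
    have hmem : A (n - m) ∈ Set.Icc b xbar := Set.mem_Icc.2 ⟨hxge, hxlt.le⟩
    have hGle : A (n - m) * F (A (n - m)) ≤ K := hxKmax hmem
    have hGpos : 0 ≤ A (n - m) * F (A (n - m)) :=
      (mul_pos (hApos _ (by omega)) (hFpos _ (hApos _ (by omega)))).le
    have : A (n + 1) ≤ K * c ^ m := by
      rw [hsplit n hnm]
      exact mul_le_mul hGle (hprodm_le n hnm)
        (Finset.prod_pos (fun j hj => hFpos _ (hposidx' n hnm j hj))).le
        (le_trans hx0.le hKge)
    have : A (n + 1) ≤ Dhi := le_trans this (le_max_left _ _)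
    linarith
  obtain ⟨N₃, hN₃⟩ := aux_up m F A xbar hcont huniq hApos hArec hx0
    Dhi (max (m : ℤ) (N₂ + m)) (le_max_left _ _) hDhi_gt keyU'
  -- refined lower bound
  have hxB : xbar ≤ B := hBgt.le
  have hGcont' : ContinuousOn (fun x : ℝ => x * F x) (Set.Icc xbar B) :=
    continuousOn_id.mul (hcont.mono (fun x hx => lt_of_lt_of_le hx0 hx.1))
  obtain ⟨xk, hxkmem, hxkmin⟩ :=
    isCompact_Icc.exists_isMinOn (Set.nonempty_Icc.2 hxB) hGcont'
  set K' : ℝ := xk * F xk with hK'def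
  have hK'le : K' ≤ xbar := by
    have := hxkmin (Set.mem_Icc.2 ⟨le_rfl, hxB⟩)
    simpa [hFx1] using this
  have hK'gt : xbar * α < K' := by
    rcases eq_or_lt_of_le hxkmem.1 with h | h
    · rw [hK'def, ← h, hFx1, mul_one]
      exact mul_lt_of_lt_one_right hx0 hα1
    · have hxk0 : 0 < xk := lt_trans hx0 h
      have := hFgeα xk hxk0
      nlinarith [hFpos xk hxk0]
  set Dlo : ℝ := min (K' * α ^ m) ((b + xbar) / 2) with hDlodef
  have hDlo_lt : Dlo < xbar :=
    min_lt_of_right_lt (by rw [hbdef]; linarith)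
  have hDlo_gt : b < Dlo := by
    apply lt_min
    · have : (xbar * α) * α ^ m < K' * α ^ m :=
        mul_lt_mul_of_pos_right hK'gt (pow_pos hα0 m)
      calc b = (xbar * α) * α ^ m := by rw [hbdef]; ring
        _ < K' * α ^ m := this
    · linarith
  have hDlo0 : 0 < Dlo := lt_trans hb0 hDlo_gt
  have keyL' : ∀ n : ℤ, max (m : ℤ) (N₁ + m) ≤ n → A (n + 1) < Dlo → A n ≤ A (n + 1) := by
    intro n hn hgt
    have hnm : (m : ℤ) ≤ n := le_trans (le_max_left _ _) hn
    by_contra hlt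
    push_neg at hlt
    have hxge := hdn_step n hnm hlt
    have hxle : A (n - m) ≤ B := hN₁ (n - m) (by omega)
    have hmem : A (n - m) ∈ Set.Icc xbar B := Set.mem_Icc.2 ⟨hxge, hxle⟩
    have hGge : K' ≤ A (n - m) * F (A (n - m)) := hxkmin hmem
    have : K' * α ^ m ≤ A (n + 1) := by
      rw [hsplit n hnm]
      exact mul_le_mul hGge (hprodm_ge n hnm) (pow_nonneg hα0.le _)
        (mul_pos (hApos _ (by omega)) (hFpos _ (hApos _ (by omega)))).le
    have : Dlo ≤ A (n + 1) := le_trans (min_le_left _ _) this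
    linarith
  obtain ⟨N₄, hN₄⟩ := aux_lo m F A xbar hcont huniq hApos hArec hx0
    Dlo (max (m : ℤ) (N₁ + m)) (le_max_left _ _) hDlo_lt keyL'
  -- pass to EReal
  have hDhi0 : 0 < Dhi := lt_trans hx0 hDhi_gt
  have hls_le : Filter.limsup (fun n => (A n : EReal)) Filter.atTop ≤ (Dhi : EReal) := by
    exact limsup_le_of_le (by isBoundedDefault)
      (eventually_atTop.2 ⟨N₃, fun n hn => EReal.coe_le_coe_iff.2 (hN₃ n hn)⟩)
  have hli_ge : (Dlo : EReal) ≤ Filter.liminf (fun n => (A n : EReal)) Filter.atTop := by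
    exact le_liminf_of_le (by isBoundedDefault)
      (eventually_atTop.2 ⟨N₄, fun n hn => EReal.coe_le_coe_iff.2 (hN₄ n hn)⟩)
  refine ⟨lt_of_lt_of_le (EReal.coe_lt_coe_iff.2 hDlo_gt) hli_ge, ?_, ?_,
    lt_of_le_of_lt hls_le (EReal.coe_lt_coe_iff.2 hDhi_lt)⟩
  · -- liminf ≤ xbar
    by_contra hcon
    push_neg at hcon
    obtain ⟨s, hs1, hs2⟩ := EReal.exists_between_coe_real hcon
    have hsx : xbar < s := EReal.coe_lt_coe_iff.1 hs1
    have hev := eventually_lt_of_lt_liminf hs2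
    obtain ⟨N₅, hN₅⟩ := eventually_atTop.1 hev
    have hN₅' : ∀ n : ℤ, N₅ ≤ n → s < A n := fun n hn => EReal.coe_lt_coe_iff.1 (hN₅ n hn)
    rcases le_or_gt s Dhi with hDs | hDs
    · have hscont : ContinuousOn F (Set.Icc s Dhi) :=
        hcont.mono (fun x hx => lt_trans hx0 (lt_of_lt_of_le hsx hx.1))
      obtain ⟨xν, hxνmem, hxνmax⟩ :=
        isCompact_Icc.exists_isMaxOn (Set.nonempty_Icc.2 hDs) hscont
      set ν : ℝ := F xν with hνdef
      have hxν0 : 0 < xν := lt_trans hx0 (lt_of_lt_of_le hsx hxνmem.1)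
      have hν1 : ν < 1 := hFlt1 xν hxν0 (lt_of_lt_of_le hsx hxνmem.1)
      have hν0 : 0 < ν := hFpos xν hxν0
      set N : ℤ := max (max N₃ N₅) (max N₄ 0) + m with hNdef
      have hN0 : (0 : ℤ) ≤ N := by positivity
      have hdecay : ∀ n : ℤ, N ≤ n → A (n + 1) ≤ ν * A n := by
        intro n hn
        have hnm : (m : ℤ) ≤ n := by omega
        have hmem : A (n - m) ∈ Set.Icc s Dhi :=
          Set.mem_Icc.2 ⟨(hN₅' (n - m) (by omega)).le, hN₃ (n - m) (by omega)⟩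
        have hFle : F (A (n - m)) ≤ ν := hxνmax hmem
        have := hArec n (by omega)
        have hAn : 0 ≤ A n := (hApos n (by omega)).le
        calc A (n + 1) = A n * F (A (n - m)) := this
          _ ≤ A n * ν := mul_le_mul_of_nonneg_left hFle hAn
          _ = ν * A n := mul_comm _ _
      have hiter : ∀ k : ℕ, A (N + k) ≤ ν ^ k * A N := by
        intro k
        induction k with
        | zero => simp
        | succ k ih =>
          have e : N + ((k : ℤ) + 1) = (N + k) + 1 := by ring
          have h1 : A ((N + k) + 1) ≤ ν * A (N + k) := hdecay (N + k) (by omega)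
          calc A (N + ((k + 1 : ℕ) : ℤ)) = A ((N + k) + 1) := by push_cast; rw [e]
            _ ≤ ν * A (N + k) := h1
            _ ≤ ν * (ν ^ k * A N) := mul_le_mul_of_nonneg_left ih hν0.le
            _ = ν ^ (k + 1) * A N := by ring
      obtain ⟨k, hk⟩ := exists_pow_lt_of_lt_one (div_pos hDlo0 hDhi0) hν1
      have hνk : ν ^ k * Dhi < Dlo := (lt_div_iff₀ hDhi0).1 hk
      have h1 : A (N + k) ≤ ν ^ k * Dhi :=
        le_trans (hiter k) (mul_le_mul_of_nonneg_left (hN₃ N (by omega)) (pow_pos hν0 k).le)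
      have h2 : Dlo ≤ A (N + k) := hN₄ (N + k) (by omega)
      linarith
    · have h1 := hN₅' (max N₅ N₃) (le_max_left _ _)
      have h2 := hN₃ (max N₅ N₃) (le_max_right _ _)
      linarith
  · -- xbar ≤ limsup
    by_contra hcon
    push_neg at hcon
    obtain ⟨s, hs1, hs2⟩ := EReal.exists_between_coe_real hcon
    have hsx : s < xbar := EReal.coe_lt_coe_iff.1 hs2
    have hev := eventually_lt_of_limsup_lt hs1
    obtain ⟨N₅, hN₅⟩ := eventually_atTop.1 hev
    have hN₅' : ∀ n : ℤ, N₅ ≤ n → A n < s := fun n hn => EReal.coe_lt_coe_iff.1 (hN₅ n hn)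
    rcases le_or_gt Dlo s with hDs | hDs
    · have hscont : ContinuousOn F (Set.Icc Dlo s) :=
        hcont.mono (fun x hx => lt_of_lt_of_le hDlo0 hx.1)
      obtain ⟨xμ, hxμmem, hxμmin⟩ :=
        isCompact_Icc.exists_isMinOn (Set.nonempty_Icc.2 hDs) hscont
      set μ : ℝ := F xμ with hμdef
      have hxμ0 : 0 < xμ := lt_of_lt_of_le hDlo0 hxμmem.1
      have hμ1 : 1 < μ := hFgt1 xμ hxμ0 (lt_of_le_of_lt hxμmem.2 hsx)
      set N : ℤ := max (max N₃ N₅) (max N₄ 0) + m with hNdef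
      have hN0 : (0 : ℤ) ≤ N := by positivity
      have hgrow : ∀ n : ℤ, N ≤ n → μ * A n ≤ A (n + 1) := by
        intro n hn
        have hmem : A (n - m) ∈ Set.Icc Dlo s :=
          Set.mem_Icc.2 ⟨hN₄ (n - m) (by omega), (hN₅' (n - m) (by omega)).le⟩
        have hFge : μ ≤ F (A (n - m)) := hxμmin hmem
        have := hArec n (by omega)
        have hAn : 0 ≤ A n := (hApos n (by omega)).le
        calc μ * A n = A n * μ := mul_comm _ _
          _ ≤ A n * F (A (n - m)) := mul_le_mul_of_nonneg_left hFge hAn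
          _ = A (n + 1) := this.symm
      have hiter : ∀ k : ℕ, μ ^ k * A N ≤ A (N + k) := by
        intro k
        induction k with
        | zero => simp
        | succ k ih =>
          have e : N + ((k : ℤ) + 1) = (N + k) + 1 := by ring
          have h1 : μ * A (N + k) ≤ A ((N + k) + 1) := hgrow (N + k) (by omega)
          have hμ0 : (0 : ℝ) ≤ μ := le_trans zero_le_one hμ1.le
          calc μ ^ (k + 1) * A N = μ * (μ ^ k * A N) := by ring
            _ ≤ μ * A (N + k) := mul_le_mul_of_nonneg_left ih hμ0
            _ ≤ A ((N + k) + 1) := h1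
            _ = A (N + ((k + 1 : ℕ) : ℤ)) := by push_cast; rw [e]
      have hAN0 : 0 < A N := hApos N (by omega)
      obtain ⟨k, hk⟩ := pow_unbounded_of_one_lt (Dhi / A N) hμ1
      have hμk : Dhi < μ ^ k * A N := by
        have := (div_lt_iff₀ hAN0).1 hk
        linarith
      have h1 : A (N + k) ≤ Dhi := hN₃ (N + k) (by omega)
      have h2 := hiter k
      linarith
    · have h1 := hN₅' (max N₅ N₄) (le_max_left _ _)
      have h2 := hN₄ (max N₅ N₄) (le_max_right _ _)
      linarith
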